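/- Let ν* ∈ ℝ satisfy sin(ν*) = βΔt − ν* with sin(ν*) ≠ 0. Then on the critical curve α(ν) = (ν − βΔt)cos(ν)/(Δt sin(ν)), G(ν) = (ν − βΔt)/(Δt sin(ν)), the point ν = ν* satisfies G(ν*) = −1/Δt and dα/dν(ν*) = dG/dν(ν*). -/

import Mathlib

theorem stmt_7 (β Δt : ℝ) (hΔt : 0 < Δt) (ν' : ℝ)
    (hν' : Real.sin ν' = β * Δt - ν') (hsin : Real.sin ν' ≠ 0) :
    (ν' - β * Δt) / (Δt * Real.sin ν') = -(1 / Δt) ∧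
    deriv (fun ν => (ν - β * Δt) * Real.cos ν / (Δt * Real.sin ν)) ν' =
      deriv (fun ν => (ν - β * Δt) / (Δt * Real.sin ν)) ν' := by
  have hΔ : Δt ≠ 0 := ne_of_gt hΔt
  have hden : Δt * Real.sin ν' ≠ 0 := mul_ne_zero hΔ hsin
  have hnum : ν' - β * Δt = -Real.sin ν' := by rw [hν']; ring
  constructor
  · rw [hnum]; field_simp
  · have hu : HasDerivAt (fun ν => (ν - β * Δt) * Real.cos ν)
        (1 * Real.cos ν' + (ν' - β * Δt) * (-Real.sin ν')) ν' := by
      exact ((hasDerivAt_id ν').sub_const _).mul (Real.hasDerivAt_cos ν')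
    have hv : HasDerivAt (fun ν => Δt * Real.sin ν) (Δt * Real.cos ν') ν' :=
      (Real.hasDerivAt_sin ν').const_mul Δt
    have hw : HasDerivAt (fun ν => ν - β * Δt) 1 ν' := (hasDerivAt_id ν').sub_const _
    have hf : deriv (fun ν => (ν - β * Δt) * Real.cos ν / (Δt * Real.sin ν)) ν' = _ := (hu.div hv hden).deriv
    have hg : deriv (fun ν => (ν - β * Δt) / (Δt * Real.sin ν)) ν' = _ := (hw.div hv hden).deriv
    rw [hf, hg]
    have hpyth := Real.sin_sq_add_cos_sq ν'
    rw [hnum]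
    field_simp
    linear_combination hpyth
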